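/- Under the combined hypotheses: X_i (i ∈ R, |R| ≥ 2) are pairwise independent real random variables with finite variance and pairwise distinct means μ_i, and C = min_{i≠j} (μ_i - μ_j)² > 0. Define the expected binary error E_bin = (1/(|R|(|R|-1))) Σ_{i≠j} P(sign(X_i - X_j) ≠ sign(μ_i - μ_j)). Then E_bin ≤ (2/(C|R|)) Σ_{i∈R} Var[X_i]. -/

import Mathlib

open MeasureTheory ProbabilityTheory Finset

theorem pair_bound {Ω : Type*} [MeasureSpace Ω] [IsProbabilityMeasure (ℙ : Measure Ω)]
    (X Y : Ω → ℝ) (hX : MemLp X 2 ℙ) (hY : MemLp Y 2 ℙ)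
    (hind : IndepFun X Y ℙ) (m : ℝ) (hm : m = (∫ ω, X ω) - ∫ ω, Y ω)
    (C : ℝ) (hC : 0 < C) (hCm : C ≤ m ^ 2) :
    (ℙ {ω | Real.sign (X ω - Y ω) ≠ Real.sign m}).toReal
      ≤ (variance X ℙ + variance Y ℙ) / C := by
  have hm0 : m ≠ 0 := by
    intro h; rw [h] at hCm; simpa using hC.not_ge (by simpa using hCm)
  set D : Ω → ℝ := X - Y with hD
  have hDp : MemLp D 2 ℙ := hX.sub hY
  have hED : (∫ ω, D ω) = m := by
    rw [hm]
    exact integral_sub (hX.integrable one_le_two) (hY.integrable one_le_two)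
  have hVarD : variance D ℙ = variance X ℙ + variance Y ℙ := by
    have h1 : D = X + (-Y) := by ext ω; simp [hD, sub_eq_add_neg]
    rw [h1, hind.neg_right.variance_add hX hY.neg]
    congr 1
    have h2 : (-Y) = fun ω => (-1 : ℝ) * Y ω := by ext ω; simp
    rw [h2, variance_const_mul]; ring_nf
  have hsub : {ω | Real.sign (X ω - Y ω) ≠ Real.sign m}
      ⊆ {ω | |m| ≤ |D ω - (∫ ω, D ω)|} := by
    intro ω hω
    simp only [Set.mem_setOf_eq] at hω ⊢
    rw [hED]
    have hDω : D ω = X ω - Y ω := rfl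
    rcases hm0.lt_or_gt with h | h
    · have hD0 : 0 ≤ D ω := by
        by_contra h'
        push_neg at h'
        rw [hDω] at h'
        exact hω (by rw [Real.sign_of_neg h', Real.sign_of_neg h])
      rw [abs_of_neg h]
      calc -m ≤ D ω - m := by linarith
        _ ≤ |D ω - m| := le_abs_self _
    · have hD0 : D ω ≤ 0 := by
        by_contra h'
        push_neg at h'
        rw [hDω] at h'
        exact hω (by rw [Real.sign_of_pos h', Real.sign_of_pos h])
      rw [abs_of_pos h]
      calc m ≤ -(D ω - m) := by linarith
        _ ≤ |D ω - m| := neg_le_abs _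
  have hcheb := meas_ge_le_variance_div_sq (μ := ℙ) hDp (abs_pos.mpr hm0)
  have h1 : ℙ {ω | Real.sign (X ω - Y ω) ≠ Real.sign m}
      ≤ ENNReal.ofReal (variance D ℙ / |m| ^ 2) :=
    le_trans (measure_mono hsub) hcheb
  have h2 := ENNReal.toReal_mono (by simp) h1
  rw [ENNReal.toReal_ofReal (div_nonneg (variance_nonneg _ _) (by positivity))] at h2
  refine h2.trans ?_
  rw [sq_abs, hVarD]
  exact div_le_div_of_nonneg_left (add_nonneg (variance_nonneg _ _) (variance_nonneg _ _)) hC hCm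

theorem stmt_3 {Ω ι : Type*} [DecidableEq ι] [MeasureSpace Ω]
    [IsProbabilityMeasure (ℙ : Measure Ω)]
    (R : Finset ι) (hR : 2 ≤ R.card)
    (X : ι → Ω → ℝ) (hX : ∀ i ∈ R, MemLp (X i) 2 ℙ)
    (hind : ∀ i ∈ R, ∀ j ∈ R, i ≠ j → IndepFun (X i) (X j) ℙ)
    (μ : ι → ℝ) (hμ : ∀ i ∈ R, μ i = ∫ ω, X i ω)
    (hdist : ∀ i ∈ R, ∀ j ∈ R, i ≠ j → μ i ≠ μ j)
    (C : ℝ) (hC : 0 < C)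
    (hCmin : ∀ i ∈ R, ∀ j ∈ R, i ≠ j → C ≤ (μ i - μ j) ^ 2) :
    (1 / ((R.card : ℝ) * ((R.card : ℝ) - 1))) *
      ∑ i ∈ R, ∑ j ∈ R.erase i,
        (ℙ {ω | Real.sign (X i ω - X j ω) ≠ Real.sign (μ i - μ j)}).toReal
    ≤ (2 / (C * (R.card : ℝ))) * ∑ i ∈ R, variance (X i) ℙ := by
  set n : ℝ := (R.card : ℝ) with hn
  have hn2 : (2 : ℝ) ≤ n := by rw [hn]; exact_mod_cast hR
  have hn0 : 0 < n := by linarith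
  have hn1 : 0 < n - 1 := by linarith
  set S := ∑ i ∈ R, variance (X i) ℙ with hS
  have hS0 : 0 ≤ S := Finset.sum_nonneg fun i _ => variance_nonneg _ _
  have key : ∑ i ∈ R, ∑ j ∈ R.erase i,
      (ℙ {ω | Real.sign (X i ω - X j ω) ≠ Real.sign (μ i - μ j)}).toReal
      ≤ ∑ i ∈ R, ∑ j ∈ R.erase i, (variance (X i) ℙ + variance (X j) ℙ) / C := by
    refine Finset.sum_le_sum fun i hi => Finset.sum_le_sum fun j hj => ?_
    have hjR := Finset.mem_of_mem_erase hj
    have hij := Finset.ne_of_mem_erase hj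
    have hij' : i ≠ j := hij.symm
    exact pair_bound (X i) (X j) (hX i hi) (hX j hjR) (hind i hi j hjR hij')
      (μ i - μ j) (by rw [hμ i hi, hμ j hjR]) C hC (hCmin i hi j hjR hij')
  have hsum : ∑ i ∈ R, ∑ j ∈ R.erase i, (variance (X i) ℙ + variance (X j) ℙ) / C
      = 2 * (n - 1) * S / C := by
    have h1 : ∀ i ∈ R, ∑ j ∈ R.erase i, (variance (X i) ℙ + variance (X j) ℙ) / C
        = ((n - 1) * variance (X i) ℙ + (S - variance (X i) ℙ)) / C := by
      intro i hi
      rw [← Finset.sum_div]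
      congr 1
      rw [Finset.sum_add_distrib, Finset.sum_const, Finset.sum_erase_eq_sub hi,
        Finset.card_erase_of_mem hi, nsmul_eq_mul]
      have h3 : ((R.card - 1 : ℕ) : ℝ) = n - 1 := by
        rw [Nat.cast_sub (by omega)]; simp [hn]
      rw [h3, ← hS]
    rw [Finset.sum_congr rfl h1, ← Finset.sum_div, Finset.sum_add_distrib,
      Finset.sum_sub_distrib, ← Finset.mul_sum, Finset.sum_const, nsmul_eq_mul, ← hS, ← hn]
    ring
  calc (1 / (n * (n - 1))) *
      ∑ i ∈ R, ∑ j ∈ R.erase i,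
        (ℙ {ω | Real.sign (X i ω - X j ω) ≠ Real.sign (μ i - μ j)}).toReal
      ≤ (1 / (n * (n - 1))) * (2 * (n - 1) * S / C) := by
        apply mul_le_mul_of_nonneg_left _ (by positivity)
        rw [← hsum]; exact key
    _ = (2 / (C * n)) * S := by field_simp
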